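/- Let f : ℝⁿ → ℝ be differentiable and L-smooth with L > 0, let g(x) = Σ_{i=1}^n g_i(x_i), set F := f + g, let x* be a global minimizer of F, ξ(x) := F(x) − F(x*), and define λ(x) := −L·inf_{y ∈ ℝⁿ} { ⟨∇f(x), y⟩ + (L/2)‖y‖² + g(x+y) − g(x) }. Assume F is strongly PL with parameter μ > 0, i.e. λ(x) ≥ μ·ξ(x) for all x ∈ ℝⁿ. Let x⁰ ∈ ℝⁿ and let the iterates x^{k+1} := x^k + (u^k)_{[S_k]}, where S_k ⊆ {1,…,n} is nonempty and u^k ∈ ℝⁿ, and suppose there is c > 0 such that for every k < K one has −U_{S_k}(x^k, u^k) ≥ c·λ(x^k). Then ξ(x^K) ≤ exp(−cμK)·ξ(x⁰). -/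

import Mathlib

open scoped RealInnerProductSpace BigOperators

/-- The quantity `λ(x) = -L · inf_y { ⟨∇f(x),y⟩ + (L/2)‖y‖² + g(x+y) - g(x) }`. -/
noncomputable def lamFun {n : ℕ} (f g : EuclideanSpace ℝ (Fin n) → ℝ) (L : ℝ)
    (x : EuclideanSpace ℝ (Fin n)) : ℝ :=
  -L * sInf (Set.range fun y : EuclideanSpace ℝ (Fin n) =>
    ⟪gradient f x, y⟫ + L / 2 * ‖y‖ ^ 2 + g (x + y) - g x)

/-- The masked vector `u_{[S]}`. -/
noncomputable def maskVec {n : ℕ} (S : Finset (Fin n)) (u : EuclideanSpace ℝ (Fin n)) :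
    EuclideanSpace ℝ (Fin n) :=
  (EuclideanSpace.equiv (Fin n) ℝ).symm fun i => if i ∈ S then u i else 0

/-- The block upper bound `U_S(x, u)` with `M = L·I`. -/
noncomputable def USFun {n : ℕ} (f : EuclideanSpace ℝ (Fin n) → ℝ) (gi : Fin n → ℝ → ℝ)
    (L : ℝ) (S : Finset (Fin n)) (x u : EuclideanSpace ℝ (Fin n)) : ℝ :=
  (∑ i ∈ S, gradient f x i * u i) + L / 2 * (∑ i ∈ S, u i ^ 2) +
    ∑ i ∈ S, (gi i (x i + u i) - gi i (x i))

theorem strongly_PL_block_descent_rate {n : ℕ} (f g : EuclideanSpace ℝ (Fin n) → ℝ)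
    (gi : Fin n → ℝ → ℝ) (L μ c : ℝ) (hL : 0 < L) (hμ : 0 < μ) (hc : 0 < c)
    (hdiff : Differentiable ℝ f)
    (hsmooth : ∀ x h : EuclideanSpace ℝ (Fin n),
      f (x + h) ≤ f x + ⟪gradient f x, h⟫ + L / 2 * ‖h‖ ^ 2)
    (hg : ∀ x : EuclideanSpace ℝ (Fin n), g x = ∑ i, gi i (x i))
    (xstar : EuclideanSpace ℝ (Fin n)) (hmin : ∀ y, f xstar + g xstar ≤ f y + g y)
    (hSPL : ∀ x : EuclideanSpace ℝ (Fin n),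
      μ * (f x + g x - (f xstar + g xstar)) ≤ lamFun f g L x)
    (X : ℕ → EuclideanSpace ℝ (Fin n)) (S : ℕ → Finset (Fin n))
    (u : ℕ → EuclideanSpace ℝ (Fin n))
    (hSne : ∀ k, (S k).Nonempty)
    (hiter : ∀ k : ℕ, X (k + 1) = X k + maskVec (S k) (u k))
    (K : ℕ)
    (hprog : ∀ k < K, c * lamFun f g L (X k) ≤ -USFun f gi L (S k) (X k) (u k)) :
    f (X K) + g (X K) - (f xstar + g xstar) ≤
      Real.exp (-(c * μ * K)) * (f (X 0) + g (X 0) - (f xstar + g xstar)) := by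

  have hxi_nonneg : ∀ k : ℕ, 0 ≤ f (X k) + g (X k) - (f xstar + g xstar) := by
    intro k; have := hmin (X k); linarith
  have hstep : ∀ k, k < K → f (X (k+1)) + g (X (k+1)) - (f xstar + g xstar) ≤
      Real.exp (-(c*μ)) * (f (X k) + g (X k) - (f xstar + g xstar)) := by
    intro k hk
    set h : EuclideanSpace ℝ (Fin n) := maskVec (S k) (u k) with hh
    have hmask : ∀ i, h i = if i ∈ S k then u k i else 0 := fun i => rfl
    have hinner : ⟪gradient f (X k), h⟫ = ∑ i ∈ S k, gradient f (X k) i * u k i := by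
      rw [PiLp.inner_apply]
      simp only [RCLike.inner_apply, conj_trivial, hmask, mul_ite, mul_zero, ite_mul, zero_mul]
      rw [Finset.sum_ite_mem, Finset.univ_inter]
      exact Finset.sum_congr rfl (fun i _ => mul_comm _ _)
    have hnorm : ‖h‖^2 = ∑ i ∈ S k, u k i ^ 2 := by
      rw [EuclideanSpace.norm_eq, Real.sq_sqrt (by positivity)]
      simp only [hmask, Real.norm_eq_abs, sq_abs, apply_ite (fun t : ℝ => t^2),
        zero_pow, ne_eq, OfNat.ofNat_ne_zero, not_false_eq_true]
      rw [Finset.sum_ite_mem, Finset.univ_inter]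
    have hgpart : g (X k + h) - g (X k) = ∑ i ∈ S k, (gi i (X k i + u k i) - gi i (X k i)) := by
      rw [hg, hg, ← Finset.sum_sub_distrib]
      rw [Finset.sum_congr rfl (fun i _ => ?_), Finset.sum_ite_mem, Finset.univ_inter]
      by_cases hi : i ∈ S k <;> simp [PiLp.add_apply, hmask, hi]
    have hdesc : f (X (k+1)) + g (X (k+1)) ≤
        f (X k) + g (X k) + USFun f gi L (S k) (X k) (u k) := by
      have hs := hsmooth (X k) h
      rw [hiter k, ← hh]
      rw [hinner, hnorm] at hs
      unfold USFun
      linarith [hgpart]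
    have h1 := hprog k hk
    have h2 := hSPL (X k)
    have h3 : f (X (k+1)) + g (X (k+1)) - (f xstar + g xstar) ≤
        (1 - c*μ) * (f (X k) + g (X k) - (f xstar + g xstar)) := by nlinarith
    have h4 : (1 - c*μ) ≤ Real.exp (-(c*μ)) := by
      have := Real.add_one_le_exp (-(c*μ)); linarith
    calc f (X (k+1)) + g (X (k+1)) - (f xstar + g xstar) ≤ _ := h3
      _ ≤ Real.exp (-(c*μ)) * (f (X k) + g (X k) - (f xstar + g xstar)) :=
        mul_le_mul_of_nonneg_right h4 (hxi_nonneg k)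
  have main : ∀ m, m ≤ K → f (X m) + g (X m) - (f xstar + g xstar) ≤
      Real.exp (-(c * μ * m)) * (f (X 0) + g (X 0) - (f xstar + g xstar)) := by
    intro m
    induction m with
    | zero => intro _; simp
    | succ k ih =>
      intro hm
      have hk : k < K := Nat.lt_of_succ_le hm
      have e1 := hstep k hk
      have e2 := ih (Nat.le_of_lt hk)
      have e3 : Real.exp (-(c*μ)) * (f (X k) + g (X k) - (f xstar + g xstar)) ≤
          Real.exp (-(c*μ)) * (Real.exp (-(c * μ * k)) *
            (f (X 0) + g (X 0) - (f xstar + g xstar))) :=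
        mul_le_mul_of_nonneg_left e2 (Real.exp_pos _).le
      have e4 : Real.exp (-(c*μ)) * Real.exp (-(c * μ * k)) =
          Real.exp (-(c * μ * (k+1 : ℕ))) := by
        rw [← Real.exp_add]; push_cast; ring_nf
      calc f (X (k+1)) + g (X (k+1)) - (f xstar + g xstar) ≤ _ := e1
        _ ≤ _ := e3
        _ = Real.exp (-(c * μ * (k+1 : ℕ))) * (f (X 0) + g (X 0) - (f xstar + g xstar)) := by
          rw [← mul_assoc, e4]
  exact main K le_rfl
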